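/- arXiv:1410.1289 — 5 statements merged into one kernel-verified Lean document; each statement's English description precedes it below -/
import Mathlib

section
/- The MIMO capacity function C(S) = log det(I + (P/N_t) · H_S H_S†), where H_S is the submatrix of H consisting of the rows indexed by S, is a monotone set function: for any subset S of row indices and any row index a ∉ S, C(S ∪ {a}) ≥ C(S). -/
open Matrix

/-- Submatrix of `H` keeping the rows indexed by the finite set `S`. -/
noncomputable def rowSub {m n : ℕ} (H : Matrix (Fin m) (Fin n) ℂ) (S : Finset (Fin m)) :
    Matrix S (Fin n) ℂ := fun i j => H i.1 j

/-- MIMO capacity `C(S) = log det (I + c • H_S H_S†)`. -/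
noncomputable def Cap {m n : ℕ} (c : ℝ) (H : Matrix (Fin m) (Fin n) ℂ) (S : Finset (Fin m)) : ℝ :=
  Real.log (((1 + (c : ℂ) • (rowSub H S * (rowSub H S)ᴴ)).det).re)

open scoped ComplexOrder in
/-- The MIMO capacity function is a monotone set function. -/
theorem cap_monotone {Nr Nt : ℕ} (hNt : 0 < Nt) (H : Matrix (Fin Nr) (Fin Nt) ℂ)
    (P : ℝ) (hP : 0 < P) (S : Finset (Fin Nr)) (a : Fin Nr) (ha : a ∉ S) :
    Cap (P / Nt) H S ≤ Cap (P / Nt) H (insert a S) := by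
  classical
  set c : ℝ := P / Nt with hc
  have hcpos : 0 < c := div_pos hP (by exact_mod_cast hNt)
  set s : ℝ := Real.sqrt c with hsdef
  have hs : (s : ℂ) * (s : ℂ) = (c : ℂ) := by
    rw [← Complex.ofReal_mul, Real.mul_self_sqrt hcpos.le]
  -- scaled submatrices
  set A : Finset (Fin Nr) → Matrix (Fin Nt) (Fin Nt) ℂ :=
    fun T => ((s : ℂ) • rowSub H T)ᴴ * ((s : ℂ) • rowSub H T) with hA
  set N : Finset (Fin Nr) → Matrix (Fin Nt) (Fin Nt) ℂ := fun T => 1 + A T with hN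
  -- the determinant identity moving to the Nt-side
  have hdet : ∀ T : Finset (Fin Nr),
      (1 + (c : ℂ) • (rowSub H T * (rowSub H T)ᴴ)).det = (N T).det := by
    intro T
    have h1 : (c : ℂ) • (rowSub H T * (rowSub H T)ᴴ)
        = ((s : ℂ) • rowSub H T) * ((s : ℂ) • rowSub H T)ᴴ := by
      rw [conjTranspose_smul, RCLike.star_def, Complex.conj_ofReal, Matrix.mul_smul,
        Matrix.smul_mul, smul_smul, hs]
    rw [h1, det_one_add_mul_comm]
  -- positive definiteness
  have hNpd : ∀ T : Finset (Fin Nr), (N T).PosDef := by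
    intro T
    exact Matrix.PosDef.add_posSemidef Matrix.PosDef.one
      (Matrix.posSemidef_conjTranspose_mul_self _)
  -- the extra row as a 1 × Nt matrix
  set B : Matrix (Fin 1) (Fin Nt) ℂ := fun _ j => (s : ℂ) * H a j with hB
  have hsplit : A (insert a S) = A S + Bᴴ * B := by
    ext j k
    simp only [hA, Matrix.mul_apply, Matrix.add_apply, conjTranspose_apply,
      Matrix.smul_apply, rowSub, smul_eq_mul, hB, Fin.sum_univ_one]
    rw [Finset.sum_coe_sort (insert a S)
      (fun i => star ((s : ℂ) * H i j) * ((s : ℂ) * H i k)),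
      Finset.sum_coe_sort S (fun i => star ((s : ℂ) * H i j) * ((s : ℂ) * H i k)),
      Finset.sum_insert ha]
    erw [Matrix.mul_apply]
    simp only [Fin.sum_univ_one]
    erw [conjTranspose_apply]
    ring
  -- matrix determinant lemma
  have hunit : IsUnit (N S).det := (hNpd S).det_pos.ne'.isUnit
  have hdet2 : (N (insert a S)).det
      = (N S).det * (1 + (B * (N S)⁻¹ * Bᴴ) 0 0) := by
    have h2 : N (insert a S) = N S + Bᴴ * B := by
      rw [hN]; simp only [hsplit, add_assoc]
    rw [h2, Matrix.det_add_mul Bᴴ B hunit, Matrix.det_fin_one]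
    simp [Matrix.add_apply, Matrix.one_apply]
  -- the 1×1 entry is a nonnegative real
  have hW : (B * (N S)⁻¹ * Bᴴ).PosSemidef :=
    ((hNpd S).inv).posSemidef.mul_mul_conjTranspose_same B
  have hW00 : 0 ≤ (B * (N S)⁻¹ * Bᴴ) 0 0 := by
    have h3 := hW.dotProduct_mulVec_nonneg (fun _ => 1)
    simpa [dotProduct, Matrix.mulVec, Fin.sum_univ_one] using h3
  -- determinant comparison in the complex order
  have hle : (N S).det ≤ (N (insert a S)).det := by
    rw [hdet2]
    exact le_mul_of_one_le_right (hNpd S).det_pos.le (le_add_of_nonneg_right hW00)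
  have hposS : 0 < ((N S).det).re := (Complex.lt_def.mp (hNpd S).det_pos).1
  have hre : ((N S).det).re ≤ ((N (insert a S)).det).re := (Complex.le_def.mp hle).1
  unfold Cap
  rw [hdet S, hdet (insert a S)]
  exact Real.log_le_log hposS hre
end

section
/- For a nonnegative, monotone, submodular set function f on a finite ground set with a matroid constraint M, the set S produced by the greedy algorithm (repeatedly adding the feasible element giving the largest marginal increase) satisfies f(S) ≥ (1/2) · max{ f(T) : T independent in M }. -/
-- telescoping
lemma telescope {U : Type*} [DecidableEq U] (f : Finset U → ℝ)
    (hsub : ∀ S T : Finset U, S ⊆ T → ∀ a ∉ T, f (insert a T) - f T ≤ f (insert a S) - f S)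
    (S : Finset U) :
    ∀ D : Finset U, (∀ a ∈ D, a ∉ S) → f (S ∪ D) ≤ f S + ∑ a ∈ D, (f (insert a S) - f S) := by
  intro D
  induction D using Finset.induction_on with
  | empty => simp
  | @insert b D' hb ih =>
    intro hDS
    have hb1 : b ∉ S ∪ D' := by
      simp only [Finset.mem_union]
      push_neg
      exact ⟨hDS b (Finset.mem_insert_self b D'), hb⟩
    have h1 : f (insert b (S ∪ D')) - f (S ∪ D') ≤ f (insert b S) - f S :=
      hsub S (S ∪ D') Finset.subset_union_left b hb1
    have h2 := ih (fun a ha => hDS a (Finset.mem_insert_of_mem ha))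
    rw [Finset.sum_insert hb, Finset.union_insert]
    linarith

-- matroid extension
lemma matroid_ext {U : Type*} [DecidableEq U] (Indep : Finset U → Prop)
    (hexch : ∀ X Y : Finset U, Indep X → Indep Y → X.card < Y.card →
      ∃ e ∈ Y \ X, Indep (insert e X))
    (Y : Finset U) (hY : Indep Y) :
    ∀ (m : ℕ) (X : Finset U), Indep X → Y.card - X.card ≤ m →
      ∃ Z, Indep Z ∧ X ⊆ Z ∧ Z ⊆ X ∪ Y ∧ Y.card ≤ Z.card := by
  intro m
  induction m with
  | zero =>
    intro X hX h
    exact ⟨X, hX, subset_rfl, Finset.subset_union_left, Nat.le_of_sub_eq_zero (Nat.le_zero.mp h)⟩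
  | succ m ih =>
    intro X hX h
    by_cases hc : Y.card ≤ X.card
    · exact ⟨X, hX, subset_rfl, Finset.subset_union_left, hc⟩
    · push_neg at hc
      obtain ⟨e, he, hIe⟩ := hexch X Y hX hY hc
      have heX : e ∉ X := (Finset.mem_sdiff.mp he).2
      have heY : e ∈ Y := (Finset.mem_sdiff.mp he).1
      have hcard : (insert e X).card = X.card + 1 := Finset.card_insert_of_notMem heX
      obtain ⟨Z, hZ, hXZ, hZXY, hYZ⟩ := ih (insert e X) hIe (by omega)
      refine ⟨Z, hZ, subset_trans (Finset.subset_insert e X) hXZ, ?_, hYZ⟩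
      intro z hz
      have := hZXY hz
      simp only [Finset.mem_union, Finset.mem_insert] at this ⊢
      rcases this with (h | h) | h
      · subst h; exact Or.inr heY
      · exact Or.inl h
      · exact Or.inr h

-- injection lemma
lemma inj_lemma {U : Type*} [DecidableEq U] (d : U → ℕ) :
    ∀ D : Finset U, (∀ k, (D.filter (fun a => d a < k)).card ≤ k) →
      ∃ φ : U → ℕ, Set.InjOn φ D ∧ ∀ a ∈ D, φ a ≤ d a ∧ φ a < D.card := by
  intro D
  induction D using Finset.strongInduction with
  | _ D ih =>
    intro hcount
    rcases D.eq_empty_or_nonempty with rfl | hne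
    · exact ⟨fun _ => 0, by simp [Set.InjOn], by simp⟩
    · obtain ⟨a, haD, hamax⟩ := Finset.exists_max_image D d hne
      have hDsub : D = D.filter (fun b => d b < d a + 1) := by
        ext b; simp only [Finset.mem_filter]
        exact ⟨fun hb => ⟨hb, Nat.lt_succ_of_le (hamax b hb)⟩, fun hb => hb.1⟩
      have hDcard : D.card ≤ d a + 1 := by
        conv_lhs => rw [hDsub]
        exact hcount (d a + 1)
      have herase : D.erase a ⊂ D := Finset.erase_ssubset haD
      obtain ⟨φ', hinj', hφ'⟩ := ih (D.erase a) herase (fun k =>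
        le_trans (Finset.card_le_card (Finset.filter_subset_filter _ (Finset.erase_subset a D)))
          (hcount k))
      have hec : (D.erase a).card = D.card - 1 := Finset.card_erase_of_mem haD
      have hDpos : 1 ≤ D.card := Finset.card_pos.mpr hne
      refine ⟨Function.update φ' a (D.card - 1), ?_, ?_⟩
      · intro x hx y hy hxy
        simp only [Finset.coe_mem, Finset.mem_coe] at hx hy
        by_cases hxa : x = a <;> by_cases hya : y = a
        · rw [hxa, hya]
        · exfalso
          rw [hxa, Function.update_self, Function.update_of_ne hya] at hxy
          have := (hφ' y (Finset.mem_erase.mpr ⟨hya, hy⟩)).2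
          omega
        · exfalso
          rw [hya, Function.update_self, Function.update_of_ne hxa] at hxy
          have := (hφ' x (Finset.mem_erase.mpr ⟨hxa, hx⟩)).2
          omega
        · rw [Function.update_of_ne hxa, Function.update_of_ne hya] at hxy
          exact hinj' (Finset.mem_coe.mpr (Finset.mem_erase.mpr ⟨hxa, hx⟩))
            (Finset.mem_coe.mpr (Finset.mem_erase.mpr ⟨hya, hy⟩)) hxy
      · intro b hb
        by_cases hba : b = a
        · subst hba
          rw [Function.update_self]
          omega
        · rw [Function.update_of_ne hba]
          have := hφ' b (Finset.mem_erase.mpr ⟨hba, hb⟩)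
          omega


def GreedyRun {U : Type*} [DecidableEq U] (f : Finset U → ℝ) (Indep : Finset U → Prop)
    (l : List U) : Prop :=
  l.Nodup ∧
  (∀ k (hk : k < l.length),
      Indep (insert (l.get ⟨k, hk⟩) (l.take k).toFinset) ∧
      ∀ a ∉ (l.take k).toFinset, Indep (insert a (l.take k).toFinset) →
        f (insert a (l.take k).toFinset) ≤ f (insert (l.get ⟨k, hk⟩) (l.take k).toFinset)) ∧
  (∀ a ∉ l.toFinset, ¬ Indep (insert a l.toFinset))


/-- Fisher–Nemhauser–Wolsey (1978): for a nonnegative monotone submodular function and a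
matroid constraint, greedy achieves at least half of the optimum. -/
theorem greedy_half_approx {U : Type*} [Fintype U] [DecidableEq U]
    (f : Finset U → ℝ) (Indep : Finset U → Prop)
    (hf0 : ∀ S, 0 ≤ f S)
    (hmono : ∀ S T : Finset U, S ⊆ T → f S ≤ f T)
    (hsub : ∀ S T : Finset U, S ⊆ T → ∀ a ∉ T,
      f (insert a T) - f T ≤ f (insert a S) - f S)
    (hempty : Indep ∅)
    (hdown : ∀ S T : Finset U, S ⊆ T → Indep T → Indep S)
    (hexch : ∀ X Y : Finset U, Indep X → Indep Y → X.card < Y.card →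
      ∃ e ∈ Y \ X, Indep (insert e X))
    (l : List U) (hl : GreedyRun f Indep l) :
    ∀ T : Finset U, Indep T → f T ≤ 2 * f l.toFinset := by
  classical
  obtain ⟨hnd, hgreedy, hterm⟩ := hl
  intro T hT
  set n := l.length with hn
  set Sk : ℕ → Finset U := fun k => (l.take k).toFinset with hSkdef
  -- basic prefix facts
  have hSn : Sk n = l.toFinset := by simp [hSkdef, hn]
  have hSkmono : ∀ {j k : ℕ}, j ≤ k → Sk j ⊆ Sk k := by
    intro j k hjk x hx
    simp only [hSkdef, List.mem_toFinset] at hx ⊢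
    have : l.take j = (l.take k).take j := by rw [List.take_take, min_eq_left hjk]
    rw [this] at hx
    exact List.take_subset _ _ hx
  have hSksub : ∀ k, Sk k ⊆ l.toFinset := by
    intro k x hx
    simp only [hSkdef, List.mem_toFinset] at hx ⊢
    exact List.take_subset _ _ hx
  have hstep : ∀ (k : ℕ) (hk : k < n), Sk (k + 1) = insert (l.get ⟨k, hk⟩) (Sk k) := by
    intro k hk
    simp only [hSkdef]
    have h : List.take (k+1) l = List.take k l ++ [l.get ⟨k,hk⟩] := by
      rw [← List.take_concat_get hk, List.concat_eq_append]
      simp [List.get_eq_getElem]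
    rw [h, List.toFinset_append]
    simp only [List.toFinset_cons, List.toFinset_nil, LawfulSingleton.insert_empty_eq]
    rw [Finset.union_comm, ← Finset.insert_eq]
  have hgetnot : ∀ (k : ℕ) (hk : k < n), l.get ⟨k, hk⟩ ∉ Sk k := by
    intro k hk
    have h1 : (l.take (k+1)).Nodup := (List.take_sublist _ _).nodup hnd
    rw [← List.take_concat_get hk, List.concat_eq_append, List.nodup_append] at h1
    intro hmem
    simp only [hSkdef, List.mem_toFinset] at hmem
    exact h1.2.2 _ hmem _ (List.mem_singleton_self _) rfl
  have hScard : ∀ k ≤ n, (Sk k).card = k := by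
    intro k hk
    simp only [hSkdef]
    rw [List.card_toFinset, ((List.take_sublist _ _).nodup hnd).dedup, List.length_take]
    omega
  have hindep : ∀ k ≤ n, Indep (Sk k) := by
    intro k
    induction k with
    | zero => intro _; simpa [hSkdef] using hempty
    | succ k ih =>
      intro hk
      rw [hstep k hk]
      exact (hgreedy k hk).1
  -- |T| ≤ n
  have hTn : T.card ≤ n := by
    by_contra hcon
    push_neg at hcon
    have hScardn : l.toFinset.card = n := by rw [← hSn]; exact hScard n le_rfl
    obtain ⟨e, he, hIe⟩ := hexch l.toFinset T (hSn ▸ hindep n le_rfl) hT (by omega)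
    exact hterm e (Finset.mem_sdiff.mp he).2 hIe
  -- the B_k cardinality bound
  have hB : ∀ k ≤ n, T.card ≤ (T.filter (fun a => Indep (insert a (Sk k)))).card + k := by
    intro k hk
    obtain ⟨Z, hZI, hSZ, hZsub, hYZ⟩ := matroid_ext Indep hexch T hT (T.card) (Sk k)
      (hindep k hk) (Nat.sub_le _ _)
    have h1 : Z \ Sk k ⊆ T.filter (fun a => Indep (insert a (Sk k))) := by
      intro z hz
      obtain ⟨hzZ, hzS⟩ := Finset.mem_sdiff.mp hz
      have hzT : z ∈ T := by
        rcases Finset.mem_union.mp (hZsub hzZ) with h | h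
        · exact absurd h hzS
        · exact h
      refine Finset.mem_filter.mpr ⟨hzT, hdown _ Z ?_ hZI⟩
      exact Finset.insert_subset hzZ hSZ
    have h2 : (Z \ Sk k).card + (Sk k).card = Z.card := Finset.card_sdiff_add_card_eq_card hSZ
    have h3 := Finset.card_le_card h1
    have h4 := hScard k hk
    omega
  -- drop times
  set d : U → ℕ := fun a => Nat.findGreatest (fun k => Indep (insert a (Sk k))) n with hd
  have hd0 : ∀ a ∈ T, Indep (insert a (Sk 0)) := by
    intro a ha
    have : insert a (Sk 0) ⊆ T := by
      simp only [hSkdef, List.take_zero, List.toFinset_nil, LawfulSingleton.insert_empty_eq]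
      simpa using ha
    exact hdown _ T this hT
  have hdspec : ∀ a ∈ T, Indep (insert a (Sk (d a))) :=
    fun a ha => Nat.findGreatest_spec (P := fun k => Indep (insert a (Sk k))) (Nat.zero_le n) (hd0 a ha)
  have hdle : ∀ a, d a ≤ n := fun a => Nat.findGreatest_le (P := fun k => Indep (insert a (Sk k))) n
  have hdmax : ∀ a, ∀ k ≤ n, Indep (insert a (Sk k)) → k ≤ d a :=
    fun a k hk h => Nat.le_findGreatest (P := fun j => Indep (insert a (Sk j))) hk h
  set D : Finset U := T \ l.toFinset with hD
  have hdlt : ∀ a ∈ D, d a < n := by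
    intro a ha
    obtain ⟨haT, haS⟩ := Finset.mem_sdiff.mp ha
    have h1 := hdle a
    rcases lt_or_ge (d a) n with h | h
    · exact h
    · exfalso
      have hda : d a = n := le_antisymm h1 h
      have hispec := hdspec a haT
      rw [hda, hSn] at hispec
      exact hterm a haS hispec
  -- counting condition
  have hcount : ∀ k, (D.filter (fun a => d a < k)).card ≤ k := by
    intro k
    rcases le_or_gt k n with hk | hk
    · have hsub1 : D.filter (fun a => d a < k) ⊆
          T \ (T.filter (fun a => Indep (insert a (Sk k)))) := by
        intro a ha
        obtain ⟨haD, hak⟩ := Finset.mem_filter.mp ha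
        obtain ⟨haT, _⟩ := Finset.mem_sdiff.mp haD
        refine Finset.mem_sdiff.mpr ⟨haT, fun hmem => ?_⟩
        exact absurd (hdmax a k hk (Finset.mem_filter.mp hmem).2) (by omega)
      have h1 := Finset.card_le_card hsub1
      have h2 : (T \ (T.filter (fun a => Indep (insert a (Sk k))))).card
          = T.card - (T.filter (fun a => Indep (insert a (Sk k)))).card :=
        Finset.card_sdiff_of_subset (Finset.filter_subset _ _)
      have h3 := hB k hk
      omega
    · have h1 : (D.filter (fun a => d a < k)).card ≤ D.card :=
        Finset.card_le_card (Finset.filter_subset _ _)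
      have h2 : D.card ≤ T.card := Finset.card_le_card (Finset.sdiff_subset)
      omega
  obtain ⟨φ, hφinj, hφ⟩ := inj_lemma d D hcount
  -- gains
  set g : ℕ → ℝ := fun i => f (Sk (i + 1)) - f (Sk i) with hg
  have hgnn : ∀ i, 0 ≤ g i :=
    fun i => by simp only [hg, sub_nonneg]; exact hmono _ _ (hSkmono (Nat.le_succ i))
  -- per-element bound
  have hper : ∀ a ∈ D, f (insert a l.toFinset) - f l.toFinset ≤ g (φ a) := by
    intro a ha
    obtain ⟨haT, haS⟩ := Finset.mem_sdiff.mp ha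
    obtain ⟨hφd, _⟩ := hφ a ha
    have hφn : φ a < n := lt_of_le_of_lt hφd (hdlt a ha)
    have hfeas : Indep (insert a (Sk (φ a))) := by
      refine hdown _ (insert a (Sk (d a))) ?_ (hdspec a haT)
      exact Finset.insert_subset_insert a (hSkmono hφd)
    have hnotmem : a ∉ Sk (φ a) := fun h => haS (hSksub _ h)
    have hgreedy1 := (hgreedy (φ a) hφn).2 a hnotmem hfeas
    have hsub1 : f (insert a l.toFinset) - f l.toFinset
        ≤ f (insert a (Sk (φ a))) - f (Sk (φ a)) :=
      hsub (Sk (φ a)) l.toFinset (hSksub _) a haS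
    have hstep1 : f (insert (l.get ⟨φ a, hφn⟩) (Sk (φ a))) = f (Sk (φ a + 1)) := by
      rw [hstep (φ a) hφn]
    simp only [hg]
    rw [← hstep1]
    linarith
  -- sum bound
  have hsum1 : ∑ a ∈ D, g (φ a) ≤ ∑ i ∈ Finset.range n, g i := by
    rw [← Finset.sum_image (fun x hx y hy h => hφinj hx hy h)]
    refine Finset.sum_le_sum_of_subset_of_nonneg ?_ (fun i _ _ => hgnn i)
    intro i hi
    obtain ⟨a, ha, rfl⟩ := Finset.mem_image.mp hi
    exact Finset.mem_range.mpr (lt_of_le_of_lt (hφ a ha).1 (hdlt a ha))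
  have htel : ∑ i ∈ Finset.range n, g i = f (Sk n) - f (Sk 0) :=
    Finset.sum_range_sub (fun i => f (Sk i)) n
  -- final chain
  have h1 : f T ≤ f (l.toFinset ∪ D) := by
    refine hmono T _ ?_
    rw [hD, Finset.union_sdiff_self_eq_union]
    exact Finset.subset_union_right
  have h2 := telescope f hsub l.toFinset D (fun a ha => (Finset.mem_sdiff.mp ha).2)
  have h3 : ∑ a ∈ D, (f (insert a l.toFinset) - f l.toFinset) ≤ ∑ a ∈ D, g (φ a) :=
    Finset.sum_le_sum hper
  have h5 : f (Sk 0) = f ∅ := by simp [hSkdef]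
  have h6 : 0 ≤ f ∅ := hf0 ∅
  rw [hSn] at htel
  linarith
end

section
/- The waterfilling rate function R(S) = max{ Σ_{i∈S} log(1 + λ_i p_i) : p_i ≥ 0, Σ_{i∈S} p_i ≤ P } over a set S of parallel Gaussian channels is a submodular set function of S. -/
noncomputable def Rate {n : ℕ} (lam : Fin n → ℝ) (Pw : ℝ) (S : Finset (Fin n)) : ℝ :=
  sSup { r : ℝ | ∃ p : Fin n → ℝ, (∀ i, 0 ≤ p i) ∧ (∑ i ∈ S, p i ≤ Pw) ∧
    r = ∑ i ∈ S, Real.log (1 + lam i * p i) }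

lemma rate_zero_mem {n : ℕ} (lam : Fin n → ℝ) {Q : ℝ} (hQ : 0 ≤ Q) (S : Finset (Fin n)) :
    (0 : ℝ) ∈ { r : ℝ | ∃ p : Fin n → ℝ, (∀ i, 0 ≤ p i) ∧ (∑ i ∈ S, p i ≤ Q) ∧
      r = ∑ i ∈ S, Real.log (1 + lam i * p i) } :=
  ⟨fun _ => 0, fun _ => le_rfl, by simpa, by simp⟩

lemma rate_bdd {n : ℕ} (lam : Fin n → ℝ) (hlam : ∀ i, 0 ≤ lam i) (Q : ℝ) (S : Finset (Fin n)) :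
    BddAbove { r : ℝ | ∃ p : Fin n → ℝ, (∀ i, 0 ≤ p i) ∧ (∑ i ∈ S, p i ≤ Q) ∧
      r = ∑ i ∈ S, Real.log (1 + lam i * p i) } := by
  refine ⟨∑ i ∈ S, Real.log (1 + lam i * Q), ?_⟩
  rintro r ⟨p, hp, hsum, rfl⟩
  refine Finset.sum_le_sum fun i hi => ?_
  have hpi : p i ≤ Q := le_trans (Finset.single_le_sum (fun j _ => hp j) hi) hsum
  have h1 : (0:ℝ) < 1 + lam i * p i := by nlinarith [hlam i, hp i]
  have h2 : 1 + lam i * p i ≤ 1 + lam i * Q := by nlinarith [hlam i]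
  exact Real.log_le_log h1 h2

lemma le_rate {n : ℕ} (lam : Fin n → ℝ) (hlam : ∀ i, 0 ≤ lam i) {Q : ℝ} (S : Finset (Fin n))
    {p : Fin n → ℝ} (hp : ∀ i, 0 ≤ p i) (hs : ∑ i ∈ S, p i ≤ Q) :
    ∑ i ∈ S, Real.log (1 + lam i * p i) ≤ Rate lam Q S :=
  le_csSup (rate_bdd lam hlam Q S) ⟨p, hp, hs, rfl⟩

lemma rate_le {n : ℕ} (lam : Fin n → ℝ) {Q : ℝ} (hQ : 0 ≤ Q) (S : Finset (Fin n)) {c : ℝ}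
    (h : ∀ p : Fin n → ℝ, (∀ i, 0 ≤ p i) → ∑ i ∈ S, p i ≤ Q →
      ∑ i ∈ S, Real.log (1 + lam i * p i) ≤ c) :
    Rate lam Q S ≤ c := by
  refine csSup_le ⟨0, rate_zero_mem lam hQ S⟩ ?_
  rintro r ⟨p, hp, hs, rfl⟩
  exact h p hp hs

/-- Concavity of the rate in the power budget, in "decreasing increments" form. -/
lemma rate_incr {n : ℕ} (lam : Fin n → ℝ) (hlam : ∀ i, 0 ≤ lam i) (S : Finset (Fin n))
    {s y Δ : ℝ} (hs : 0 ≤ s) (hsy : s ≤ y) (hΔ : 0 ≤ Δ) :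
    Rate lam (y + Δ) S + Rate lam s S ≤ Rate lam (s + Δ) S + Rate lam y S := by
  rcases eq_or_lt_of_le (show s ≤ y + Δ by linarith) with h | hlt
  · have hy : s = y := le_antisymm hsy (by linarith)
    have hΔ0 : Δ = 0 := by linarith
    subst hy; subst hΔ0
    simp
  · set t := Δ / (y + Δ - s) with htdef
    have hden : 0 < y + Δ - s := by linarith
    have ht0 : 0 ≤ t := div_nonneg hΔ hden.le
    have ht1 : t ≤ 1 := (div_le_one hden).2 (by linarith)
    have htmul : t * (y + Δ - s) = Δ := div_mul_cancel₀ _ hden.ne'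
    have h1 : Rate lam (y + Δ) S ≤ Rate lam (s + Δ) S + Rate lam y S - Rate lam s S := by
      apply rate_le lam (by linarith)
      intro q hq hqs
      have h2 : Rate lam s S ≤
          Rate lam (s + Δ) S + Rate lam y S - ∑ i ∈ S, Real.log (1 + lam i * q i) := by
        apply rate_le lam hs
        intro p hp hps
        set u : Fin n → ℝ := fun i => (1 - t) * p i + t * q i with hu
        set v : Fin n → ℝ := fun i => t * p i + (1 - t) * q i with hv
        have hu0 : ∀ i, 0 ≤ u i := fun i =>
          add_nonneg (mul_nonneg (by linarith) (hp i)) (mul_nonneg ht0 (hq i))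
        have hv0 : ∀ i, 0 ≤ v i := fun i =>
          add_nonneg (mul_nonneg ht0 (hp i)) (mul_nonneg (by linarith) (hq i))
        have husum : ∑ i ∈ S, u i ≤ s + Δ := by
          have e : ∑ i ∈ S, u i = (1 - t) * ∑ i ∈ S, p i + t * ∑ i ∈ S, q i := by
            simp [hu, Finset.sum_add_distrib, Finset.mul_sum]
          have e1 := mul_le_mul_of_nonneg_left hps (show (0:ℝ) ≤ 1 - t by linarith)
          have e2 := mul_le_mul_of_nonneg_left hqs ht0
          nlinarith [htmul]
        have hvsum : ∑ i ∈ S, v i ≤ y := by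
          have e : ∑ i ∈ S, v i = t * ∑ i ∈ S, p i + (1 - t) * ∑ i ∈ S, q i := by
            simp [hv, Finset.sum_add_distrib, Finset.mul_sum]
          have e1 := mul_le_mul_of_nonneg_left hps ht0
          have e2 := mul_le_mul_of_nonneg_left hqs (show (0:ℝ) ≤ 1 - t by linarith)
          nlinarith [htmul]
        have key : ∀ i ∈ S, Real.log (1 + lam i * p i) + Real.log (1 + lam i * q i) ≤
            Real.log (1 + lam i * u i) + Real.log (1 + lam i * v i) := by
          intro i _
          have hA : (0:ℝ) < 1 + lam i * p i := by nlinarith [hlam i, hp i]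
          have hB : (0:ℝ) < 1 + lam i * q i := by nlinarith [hlam i, hq i]
          have hcon := strictConcaveOn_log_Ioi.concaveOn
          have c1 := hcon.2 (Set.mem_Ioi.2 hA) (Set.mem_Ioi.2 hB)
            (show (0:ℝ) ≤ 1 - t by linarith) ht0 (by ring)
          have c2 := hcon.2 (Set.mem_Ioi.2 hA) (Set.mem_Ioi.2 hB)
            ht0 (show (0:ℝ) ≤ 1 - t by linarith) (by ring)
          simp only [smul_eq_mul] at c1 c2
          have e1 : (1 - t) * (1 + lam i * p i) + t * (1 + lam i * q i) = 1 + lam i * u i := by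
            simp only [hu]; ring
          have e2 : t * (1 + lam i * p i) + (1 - t) * (1 + lam i * q i) = 1 + lam i * v i := by
            simp only [hv]; ring
          rw [e1] at c1; rw [e2] at c2
          nlinarith [c1, c2]
        have hsumkey : ∑ i ∈ S, Real.log (1 + lam i * p i) + ∑ i ∈ S, Real.log (1 + lam i * q i)
            ≤ ∑ i ∈ S, Real.log (1 + lam i * u i) + ∑ i ∈ S, Real.log (1 + lam i * v i) := by
          rw [← Finset.sum_add_distrib, ← Finset.sum_add_distrib]
          exact Finset.sum_le_sum key
        have hu' := le_rate lam hlam (Q := s + Δ) S hu0 husum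
        have hv' := le_rate lam hlam (Q := y) S hv0 hvsum
        linarith
      linarith
    linarith

/-- Larger sets have larger marginal value of power. -/
lemma rate_diff {n : ℕ} (lam : Fin n → ℝ) (hlam : ∀ i, 0 ≤ lam i) {S T : Finset (Fin n)}
    (hST : S ⊆ T) {y Q : ℝ} (hy : 0 ≤ y) (hyQ : y ≤ Q) :
    Rate lam y T + Rate lam Q S ≤ Rate lam Q T + Rate lam y S := by
  have hQ : 0 ≤ Q := le_trans hy hyQ
  have h1 : Rate lam y T ≤ Rate lam Q T + Rate lam y S - Rate lam Q S := by
    apply rate_le lam hy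
    intro p hp hps
    set s := ∑ i ∈ S, p i with hsdef
    have hs0 : 0 ≤ s := Finset.sum_nonneg fun i _ => hp i
    have hsle : s ≤ y :=
      le_trans (Finset.sum_le_sum_of_subset_of_nonneg hST fun i _ _ => hp i) hps
    have hφsplit : ∑ i ∈ T \ S, Real.log (1 + lam i * p i)
        + ∑ i ∈ S, Real.log (1 + lam i * p i) = ∑ i ∈ T, Real.log (1 + lam i * p i) :=
      Finset.sum_sdiff hST
    have hpsplit : ∑ i ∈ T \ S, p i + s = ∑ i ∈ T, p i := Finset.sum_sdiff hST
    have hkey : Rate lam (s + (Q - y)) S ≤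
        Rate lam Q T - ∑ i ∈ T \ S, Real.log (1 + lam i * p i) := by
      apply rate_le lam (by linarith)
      intro q hq hqs
      set w : Fin n → ℝ := fun i => if i ∈ S then q i else p i with hw
      have hw0 : ∀ i, 0 ≤ w i := fun i => by
        by_cases h : i ∈ S <;> simp [hw, h, hp i, hq i]
      have hwS : ∑ i ∈ S, w i = ∑ i ∈ S, q i :=
        Finset.sum_congr rfl fun i hi => by simp [hw, hi]
      have hwTS : ∑ i ∈ T \ S, w i = ∑ i ∈ T \ S, p i :=
        Finset.sum_congr rfl fun i hi => by simp [hw, (Finset.mem_sdiff.1 hi).2]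
      have hwsum : ∑ i ∈ T, w i ≤ Q := by
        rw [← Finset.sum_sdiff hST (f := w), hwTS, hwS]; linarith
      have hval : ∑ i ∈ T, Real.log (1 + lam i * w i) =
          ∑ i ∈ T \ S, Real.log (1 + lam i * p i) + ∑ i ∈ S, Real.log (1 + lam i * q i) := by
        rw [← Finset.sum_sdiff hST (f := fun i => Real.log (1 + lam i * w i))]
        congr 1
        · exact Finset.sum_congr rfl fun i hi => by simp [hw, (Finset.mem_sdiff.1 hi).2]
        · exact Finset.sum_congr rfl fun i hi => by simp [hw, hi]
      have := le_rate lam hlam (Q := Q) T hw0 hwsum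
      rw [hval] at this
      linarith
    have hinc := rate_incr lam hlam S hs0 hsle (show (0:ℝ) ≤ Q - y by linarith)
    rw [show y + (Q - y) = Q by ring] at hinc
    have hφS : ∑ i ∈ S, Real.log (1 + lam i * p i) ≤ Rate lam s S :=
      le_rate lam hlam S hp le_rfl
    linarith
  linarith

/-- Waterfilling is submodular (Vaze): `R(S∪{a}) − R(S) ≥ R(T∪{a}) − R(T)` for
`S ⊆ T` and `a ∉ T`. -/
theorem rate_submodular {n : ℕ} (lam : Fin n → ℝ) (hlam : ∀ i, 0 ≤ lam i)
    (Pw : ℝ) (hPw : 0 < Pw) (S T : Finset (Fin n)) (hST : S ⊆ T)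
    (a : Fin n) (ha : a ∉ T) :
    Rate lam Pw (insert a T) - Rate lam Pw T ≤
      Rate lam Pw (insert a S) - Rate lam Pw S := by
  have hP : 0 ≤ Pw := hPw.le
  have haS : a ∉ S := fun h => ha (hST h)
  rw [sub_le_sub_iff]
  have hmain : Rate lam Pw (insert a T) ≤
      Rate lam Pw (insert a S) + Rate lam Pw T - Rate lam Pw S := by
    apply rate_le lam hP
    intro p hp hps
    rw [Finset.sum_insert ha] at hps
    have hx0 : 0 ≤ p a := hp a
    have hT0 : 0 ≤ ∑ i ∈ T, p i := Finset.sum_nonneg fun i _ => hp i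
    have hxP : p a ≤ Pw := by linarith
    have hTsum : ∑ i ∈ T, p i ≤ Pw - p a := by linarith
    have h1 : ∑ i ∈ T, Real.log (1 + lam i * p i) ≤ Rate lam (Pw - p a) T :=
      le_rate lam hlam T hp hTsum
    have h2 := rate_diff lam hlam hST (show (0:ℝ) ≤ Pw - p a by linarith)
      (show Pw - p a ≤ Pw by linarith)
    have h3 : Real.log (1 + lam a * p a) + Rate lam (Pw - p a) S ≤
        Rate lam Pw (insert a S) := by
      have : Rate lam (Pw - p a) S ≤
          Rate lam Pw (insert a S) - Real.log (1 + lam a * p a) := by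
        apply rate_le lam (by linarith)
        intro q hq hqs
        set w : Fin n → ℝ := fun i => if i = a then p a else q i with hw
        have hw0 : ∀ i, 0 ≤ w i := fun i => by
          by_cases h : i = a <;> simp [hw, h, hp a, hq i]
        have hwS : ∑ i ∈ S, w i = ∑ i ∈ S, q i :=
          Finset.sum_congr rfl fun i hi => by
            have : i ≠ a := fun h => haS (h ▸ hi)
            simp [hw, this]
        have hwsum : ∑ i ∈ insert a S, w i ≤ Pw := by
          rw [Finset.sum_insert haS, hwS]
          simp only [hw, if_pos rfl]
          linarith
        have := le_rate lam hlam (Q := Pw) (insert a S) hw0 hwsum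
        rw [Finset.sum_insert haS] at this
        have hwa : w a = p a := by simp [hw]
        have hφS : ∑ i ∈ S, Real.log (1 + lam i * w i) =
            ∑ i ∈ S, Real.log (1 + lam i * q i) :=
          Finset.sum_congr rfl fun i hi => by
            have : i ≠ a := fun h => haS (h ▸ hi)
            simp [hw, this]
        rw [hwa, hφS] at this
        linarith
      linarith
    rw [Finset.sum_insert ha]
    linarith
  linarith
end

section
/- For positive semidefinite Hermitian matrices A and B with B − A positive semidefinite, and any vector h, the capacity increment satisfies log det(I + B + h h†) − log det(I + B) ≤ log det(I + A + h h†) − log det(I + A). Equivalently, log(1 + h†(I + B)⁻¹ h) ≤ log(1 + h†(I + A)⁻¹ h). -/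
open Matrix ComplexOrder

/-- Operator antitonicity of the inverse, scalar (quadratic form) version. -/
lemma quad_inv_antitone {n : ℕ} {P Q : Matrix (Fin n) (Fin n) ℂ}
    (hP : P.PosDef) (hQ : Q.PosDef) (hD : (Q - P).PosSemidef) (h : Fin n → ℂ) :
    star h ⬝ᵥ (Q⁻¹ *ᵥ h) ≤ star h ⬝ᵥ (P⁻¹ *ᵥ h) := by
  set y := Q⁻¹ *ᵥ h with hy
  set u := P⁻¹ *ᵥ h with hu
  have hQy : Q *ᵥ y = h := by
    rw [hy, mulVec_mulVec, Matrix.mul_nonsing_inv _ ((Matrix.isUnit_iff_isUnit_det _).mp hQ.isUnit),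
      one_mulVec]
  have hPu : P *ᵥ u = h := by
    rw [hu, mulVec_mulVec, Matrix.mul_nonsing_inv _ ((Matrix.isUnit_iff_isUnit_det _).mp hP.isUnit),
      one_mulVec]
  -- star v ᵥ* M = star (M *ᵥ v) for Hermitian M
  have hermP : ∀ v : Fin n → ℂ, star v ᵥ* P = star (P *ᵥ v) := by
    intro v; rw [star_mulVec, hP.isHermitian.eq]
  have hermQ : ∀ v : Fin n → ℂ, star v ᵥ* Q = star (Q *ᵥ v) := by
    intro v; rw [star_mulVec, hQ.isHermitian.eq]
  have e1 : star u ⬝ᵥ (P *ᵥ y) = star h ⬝ᵥ y := by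
    rw [dotProduct_mulVec, hermP, hPu]
  have e2 : star y ⬝ᵥ (P *ᵥ u) = star y ⬝ᵥ h := by rw [hPu]
  have e3 : star u ⬝ᵥ (P *ᵥ u) = star h ⬝ᵥ u := by
    rw [dotProduct_mulVec, hermP, hPu]
  have e4 : star y ⬝ᵥ (Q *ᵥ y) = star y ⬝ᵥ h := by rw [hQy]
  have key : star h ⬝ᵥ u - star h ⬝ᵥ y
      = star (y - u) ⬝ᵥ (P *ᵥ (y - u)) + star y ⬝ᵥ ((Q - P) *ᵥ y) := by
    have expand : star (y - u) ⬝ᵥ (P *ᵥ (y - u)) + star y ⬝ᵥ ((Q - P) *ᵥ y)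
        = star y ⬝ᵥ (P *ᵥ y) - star y ⬝ᵥ (P *ᵥ u) - star u ⬝ᵥ (P *ᵥ y)
          + star u ⬝ᵥ (P *ᵥ u) + star y ⬝ᵥ (Q *ᵥ y) - star y ⬝ᵥ (P *ᵥ y) := by
      simp only [star_sub, sub_mulVec, mulVec_sub, sub_dotProduct, dotProduct_sub]
      ring
    rw [expand, e1, e2, e3, e4]
    have hyh : star h ⬝ᵥ y = star y ⬝ᵥ h := by
      rw [hy, dotProduct_mulVec]
      conv_rhs => rw [star_mulVec, hQ.isHermitian.inv.eq]
    rw [hyh]; ring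
  have h1 : 0 ≤ star (y - u) ⬝ᵥ (P *ᵥ (y - u)) := hP.posSemidef.dotProduct_mulVec_nonneg _
  have h2 : 0 ≤ star y ⬝ᵥ ((Q - P) *ᵥ y) := hD.dotProduct_mulVec_nonneg _
  have : 0 ≤ star h ⬝ᵥ u - star h ⬝ᵥ y := by rw [key]; exact add_nonneg h1 h2
  exact sub_nonneg.mp this

/-- Matrix determinant lemma specialization, real parts, for `M` PSD. -/
lemma det_re_split {n : ℕ} {M : Matrix (Fin n) (Fin n) ℂ} (hM : M.PosSemidef) (h : Fin n → ℂ) :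
    ((1 + M + vecMulVec h (star h)).det).re
      = ((1 + M).det).re * (1 + (star h ⬝ᵥ ((1 + M)⁻¹ *ᵥ h)).re) ∧
      0 < ((1 + M).det).re ∧ 0 ≤ (star h ⬝ᵥ ((1 + M)⁻¹ *ᵥ h)).re := by
  have h1M : (1 + M).PosDef := Matrix.PosDef.one.add_posSemidef hM
  have hdet : (0 : ℂ) < (1 + M).det := h1M.det_pos
  have hdre : 0 < ((1 + M).det).re ∧ 0 = ((1 + M).det).im := by
    rw [Complex.lt_def] at hdet; simpa using hdet
  have hq : (0 : ℂ) ≤ star h ⬝ᵥ ((1 + M)⁻¹ *ᵥ h) := h1M.inv.posSemidef.dotProduct_mulVec_nonneg h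
  have hqre : 0 ≤ (star h ⬝ᵥ ((1 + M)⁻¹ *ᵥ h)).re ∧ 0 = (star h ⬝ᵥ ((1 + M)⁻¹ *ᵥ h)).im := by
    rw [Complex.le_def] at hq; simpa using hq
  refine ⟨?_, hdre.1, hqre.1⟩
  have hdl : (1 + M + vecMulVec h (star h)).det
      = (1 + M).det * (1 + star h ⬝ᵥ ((1 + M)⁻¹ *ᵥ h)) := by
    rw [vecMulVec_eq Unit h (star h),
      Matrix.det_add_replicateCol_mul_replicateRow ((Matrix.isUnit_iff_isUnit_det _).mp h1M.isUnit)]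
    congr 1
    rw [det_unique, Matrix.add_apply, Matrix.one_apply_eq, ← Matrix.replicateRow_vecMul,
      Matrix.replicateRow_mul_replicateCol_apply, ← Matrix.dotProduct_mulVec]
  rw [hdl, Complex.mul_re, Complex.add_re, Complex.add_im, Complex.one_re, Complex.one_im,
    ← hdre.2, ← hqre.2]
  ring

/-- For Hermitian PSD matrices `A ⪯ B` and any vector `h`, the log-det increment from
adding the rank-one term `h h†` is smaller at `B` than at `A`:
`log det(I + B + h h†) − log det(I + B) ≤ log det(I + A + h h†) − log det(I + A)`. -/
theorem logdet_increment_antitone {n : ℕ} (A B : Matrix (Fin n) (Fin n) ℂ)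
    (hA : A.PosSemidef) (hB : B.PosSemidef) (hBA : (B - A).PosSemidef)
    (h : Fin n → ℂ) :
    Real.log (((1 + B + vecMulVec h (star h)).det).re) - Real.log (((1 + B).det).re) ≤
      Real.log (((1 + A + vecMulVec h (star h)).det).re) - Real.log (((1 + A).det).re) := by
  obtain ⟨eA, dA, qA⟩ := det_re_split hA h
  obtain ⟨eB, dB, qB⟩ := det_re_split hB h
  rw [eA, eB, Real.log_mul (ne_of_gt dA) (by linarith), Real.log_mul (ne_of_gt dB) (by linarith)]
  have hq : star h ⬝ᵥ ((1 + B)⁻¹ *ᵥ h) ≤ star h ⬝ᵥ ((1 + A)⁻¹ *ᵥ h) := by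
    refine quad_inv_antitone (Matrix.PosDef.one.add_posSemidef hA)
      (Matrix.PosDef.one.add_posSemidef hB) ?_ h
    rw [add_sub_add_left_eq_sub]; exact hBA
  have hqre : (star h ⬝ᵥ ((1 + B)⁻¹ *ᵥ h)).re ≤ (star h ⬝ᵥ ((1 + A)⁻¹ *ᵥ h)).re := by
    rw [Complex.le_def] at hq; exact hq.1
  have := Real.log_le_log (by linarith) (by linarith : 1 + (star h ⬝ᵥ ((1 + B)⁻¹ *ᵥ h)).re ≤ 1 + (star h ⬝ᵥ ((1 + A)⁻¹ *ᵥ h)).re)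
  linarith
end

section
/- In one pipage-rounding step that moves a fractional vector y along the direction e_i − e_j (adding ε to coordinate i, subtracting ε from coordinate j), the multilinear extension F of a submodular function, viewed as a function φ(ε) = F(y + ε(e_i − e_j)), is convex in ε; hence its maximum over an interval is attained at an endpoint. -/
noncomputable def mlext {n : ℕ} (f : Finset (Fin n) → ℝ) (x : Fin n → ℝ) : ℝ :=
  ∑ A : Finset (Fin n), f A * ((∏ i ∈ A, x i) * ∏ j ∈ Aᶜ, (1 - x j))

private lemma quad_convexOn (A B C : ℝ) (hA : 0 ≤ A) :
    ConvexOn ℝ Set.univ (fun ε : ℝ => A * ε ^ 2 + (B * ε + C)) := by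
  have h1 : ConvexOn ℝ Set.univ (fun ε : ℝ => A * ε ^ 2) := by
    simpa [smul_eq_mul] using (Even.convexOn_pow (even_two)).smul hA (𝕜 := ℝ)
  have h2 : ConvexOn ℝ Set.univ (fun ε : ℝ => B * ε + C) := by
    refine ⟨convex_univ, ?_⟩
    intro x _ y _ a b ha hb hab
    have hb' : b = 1 - a := by linarith
    subst hb'
    simp only [smul_eq_mul]
    exact le_of_eq (by ring)
  simpa [Pi.add_def] using h1.add h2

private lemma bracket_convexOn (p q F0 F1 F2 F3 QR : ℝ) (hQR : 0 ≤ QR)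
    (hsub : F3 - F2 ≤ F1 - F0) :
    ConvexOn ℝ Set.univ (fun ε : ℝ =>
      QR * (F0 * ((1 - (p + ε)) * (1 - (q - ε))) + F1 * ((p + ε) * (1 - (q - ε)))
        + F2 * ((1 - (p + ε)) * (q - ε)) + F3 * ((p + ε) * (q - ε)))) := by
  have hA : 0 ≤ QR * (F1 + F2 - F0 - F3) := mul_nonneg hQR (by linarith)
  have key := quad_convexOn (QR * (F1 + F2 - F0 - F3))
    (QR * (F0 * (q - p) + F1 * (1 + p - q) + F2 * (p - q - 1) + F3 * (q - p)))
    (QR * (F0 * (1 - p - q + p * q) + F1 * (p - p * q) + F2 * (q - p * q) + F3 * (p * q))) hA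
  have heq : (fun ε : ℝ =>
      QR * (F0 * ((1 - (p + ε)) * (1 - (q - ε))) + F1 * ((p + ε) * (1 - (q - ε)))
        + F2 * ((1 - (p + ε)) * (q - ε)) + F3 * ((p + ε) * (q - ε))))
      = (fun ε : ℝ => QR * (F1 + F2 - F0 - F3) * ε ^ 2 +
          ((QR * (F0 * (q - p) + F1 * (1 + p - q) + F2 * (p - q - 1) + F3 * (q - p))) * ε +
            QR * (F0 * (1 - p - q + p * q) + F1 * (p - p * q) + F2 * (q - p * q) + F3 * (p * q)))) := by
    funext ε; ring
  rw [heq]; exact key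

private lemma convexOn_finset_sum {ι : Type*} (s : Finset ι) (g : ι → ℝ → ℝ)
    (h : ∀ a ∈ s, ConvexOn ℝ Set.univ (g a)) :
    ConvexOn ℝ Set.univ (fun x => ∑ a ∈ s, g a x) := by
  classical
  revert h
  induction s using Finset.cons_induction with
  | empty => intro _; simpa using convexOn_const (0 : ℝ) convex_univ
  | cons a s ha ih =>
    intro h
    simp only [Finset.sum_cons]
    have h1 := h a (Finset.mem_cons_self a s)
    have h2 := ih (fun b hb => h b (Finset.mem_cons_of_mem hb))
    simpa [Pi.add_def] using h1.add h2

/-- In a pipage-rounding step moving `y` along `e_i − e_j`, the multilinear extension of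
a submodular function, viewed as `φ(ε) = F(y + ε(e_i − e_j))`, is convex in `ε`; hence
its maximum over any interval is attained at an endpoint. -/
theorem pipage_direction_convex {n : ℕ} (f : Finset (Fin n) → ℝ)
    (hsub : ∀ A B : Finset (Fin n), A ⊆ B → ∀ a ∉ B,
      f (insert a B) - f B ≤ f (insert a A) - f A)
    (y : Fin n → ℝ) (hy : ∀ k, y k ∈ Set.Icc (0 : ℝ) 1)
    (i j : Fin n) (hij : i ≠ j) :
    ConvexOn ℝ Set.univ
        (fun ε : ℝ => mlext f
          (fun k => y k + ε * ((if k = i then 1 else 0) - (if k = j then 1 else 0)))) ∧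
      ∀ a b : ℝ, a ≤ b → ∀ ε ∈ Set.Icc a b,
        mlext f (fun k => y k + ε * ((if k = i then 1 else 0) - (if k = j then 1 else 0)))
          ≤ max
            (mlext f (fun k => y k + a * ((if k = i then 1 else 0) - (if k = j then 1 else 0))))
            (mlext f (fun k => y k + b * ((if k = i then 1 else 0) - (if k = j then 1 else 0)))) := by
  classical
  have hji : j ≠ i := hij.symm
  set s : Finset (Fin n) := (Finset.univ.erase i).erase j with hs
  have hjs : j ∉ s := Finset.notMem_erase _ _
  have hins : insert j s = Finset.univ.erase i :=
    Finset.insert_erase (Finset.mem_erase.mpr ⟨hji, Finset.mem_univ j⟩)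
  have hi_ins : i ∉ insert j s := by rw [hins]; exact Finset.notMem_erase _ _
  have huniv : insert i (insert j s) = Finset.univ := by
    rw [hins]; exact Finset.insert_erase (Finset.mem_univ i)
  -- per-set data
  set Q : Finset (Fin n) → ℝ := fun A => ∏ k ∈ A, y k with hQ
  set R : Finset (Fin n) → ℝ := fun A => ∏ k ∈ (Aᶜ.erase i).erase j, (1 - y k) with hR
  set G : Finset (Fin n) → ℝ → ℝ := fun A ε =>
    (Q A * R A) * (f A * ((1 - (y i + ε)) * (1 - (y j - ε)))
      + f (insert i A) * ((y i + ε) * (1 - (y j - ε)))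
      + f (insert j A) * ((1 - (y i + ε)) * (y j - ε))
      + f (insert i (insert j A)) * ((y i + ε) * (y j - ε))) with hG
  -- membership facts for subsets of s
  have hmem : ∀ A ∈ s.powerset, i ∉ A ∧ j ∉ A := by
    intro A hA
    rw [Finset.mem_powerset] at hA
    constructor
    · intro h; have := hA h; rw [hs] at this
      exact (Finset.mem_erase.mp (Finset.mem_erase.mp this).2).1 rfl
    · intro h; have := hA h; rw [hs] at this
      exact (Finset.mem_erase.mp this).1 rfl
  -- the key identity
  have key : ∀ ε : ℝ,
      mlext f (fun k => y k + ε * ((if k = i then 1 else 0) - (if k = j then 1 else 0)))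
        = ∑ A ∈ s.powerset, G A ε := by
    intro ε
    set x : Fin n → ℝ :=
      fun k => y k + ε * ((if k = i then 1 else 0) - (if k = j then 1 else 0)) with hx
    have hxi : x i = y i + ε := by simp [hx, hij]
    have hxj : x j = y j - ε := by simp [hx, hji]; ring
    have hxk : ∀ k, k ≠ i → k ≠ j → x k = y k := by
      intro k h1 h2; simp [hx, h1, h2]
    show (∑ A : Finset (Fin n), f A * ((∏ k ∈ A, x k) * ∏ k ∈ Aᶜ, (1 - x k))) = _
    have step1 : (∑ A : Finset (Fin n), f A * ((∏ k ∈ A, x k) * ∏ k ∈ Aᶜ, (1 - x k)))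
        = ∑ A ∈ (insert i (insert j s)).powerset,
            f A * ((∏ k ∈ A, x k) * ∏ k ∈ Aᶜ, (1 - x k)) := by
      rw [huniv, Finset.powerset_univ]
    rw [step1,
      Finset.sum_powerset_insert hi_ins
        (fun A => f A * ((∏ k ∈ A, x k) * ∏ k ∈ Aᶜ, (1 - x k))),
      Finset.sum_powerset_insert hjs
        (fun A => f A * ((∏ k ∈ A, x k) * ∏ k ∈ Aᶜ, (1 - x k))),
      Finset.sum_powerset_insert hjs
        (fun A => f (insert i A) *
          ((∏ k ∈ insert i A, x k) * ∏ k ∈ (insert i A)ᶜ, (1 - x k))),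
      ]
    simp only [← Finset.sum_add_distrib]
    refine Finset.sum_congr rfl ?_
    intro A hA
    obtain ⟨hiA, hjA⟩ := hmem A hA
    have hAs : A ⊆ s := Finset.mem_powerset.mp hA
    have hiA' : i ∈ Aᶜ := Finset.mem_compl.mpr hiA
    have hjA' : j ∈ Aᶜ.erase i := Finset.mem_erase.mpr ⟨hji, Finset.mem_compl.mpr hjA⟩
    have hiA'' : i ∈ Aᶜ.erase j := Finset.mem_erase.mpr ⟨hij, hiA'⟩
    have hrest : ∏ k ∈ (Aᶜ.erase i).erase j, (1 - x k) = R A := by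
      refine Finset.prod_congr rfl ?_
      intro k hk
      have hk1 : k ≠ j := (Finset.mem_erase.mp hk).1
      have hk2 : k ≠ i := (Finset.mem_erase.mp (Finset.mem_erase.mp hk).2).1
      rw [hxk k hk2 hk1]
    have hprodA : ∏ k ∈ A, x k = Q A := by
      refine Finset.prod_congr rfl ?_
      intro k hk
      have hks := hAs hk
      rw [hs] at hks
      have hk1 : k ≠ j := (Finset.mem_erase.mp hks).1
      have hk2 : k ≠ i := (Finset.mem_erase.mp (Finset.mem_erase.mp hks).2).1
      exact hxk k hk2 hk1
    have hcA : ∏ k ∈ Aᶜ, (1 - x k) = (1 - x i) * ((1 - x j) * R A) := by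
      rw [← Finset.mul_prod_erase _ _ hiA', ← Finset.mul_prod_erase _ _ hjA', hrest]
    have hcjA : ∏ k ∈ (insert j A)ᶜ, (1 - x k) = (1 - x i) * R A := by
      rw [Finset.compl_insert, ← Finset.mul_prod_erase _ _ hiA'',
        Finset.erase_right_comm, hrest]
    have hciA : ∏ k ∈ (insert i A)ᶜ, (1 - x k) = (1 - x j) * R A := by
      rw [Finset.compl_insert, ← Finset.mul_prod_erase _ _ hjA', hrest]
    have hcijA : ∏ k ∈ (insert i (insert j A))ᶜ, (1 - x k) = R A := by
      rw [Finset.compl_insert, Finset.compl_insert, Finset.erase_right_comm, hrest]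
    have hpjA : ∏ k ∈ insert j A, x k = x j * Q A := by
      rw [Finset.prod_insert hjA, hprodA]
    have hpiA : ∏ k ∈ insert i A, x k = x i * Q A := by
      rw [Finset.prod_insert hiA, hprodA]
    have hijA : i ∉ insert j A := by simp [hij, hiA]
    have hpijA : ∏ k ∈ insert i (insert j A), x k = x i * (x j * Q A) := by
      rw [Finset.prod_insert hijA, hpjA]
    rw [hprodA, hcA, hpjA, hcjA, hpiA, hciA, hpijA, hcijA, hG, hxi, hxj]
    ring
  -- convexity
  have hconv : ConvexOn ℝ Set.univ
      (fun ε : ℝ => mlext f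
        (fun k => y k + ε * ((if k = i then 1 else 0) - (if k = j then 1 else 0)))) := by
    have heq : (fun ε : ℝ => mlext f
        (fun k => y k + ε * ((if k = i then 1 else 0) - (if k = j then 1 else 0))))
        = fun ε => ∑ A ∈ s.powerset, G A ε := funext key
    rw [heq]
    refine convexOn_finset_sum _ _ ?_
    intro A hA
    obtain ⟨hiA, hjA⟩ := hmem A hA
    have hQR : 0 ≤ Q A * R A := by
      refine mul_nonneg ?_ ?_
      · exact Finset.prod_nonneg fun k _ => (hy k).1
      · exact Finset.prod_nonneg fun k _ => by linarith [(hy k).2]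
    have hsub' : f (insert i (insert j A)) - f (insert j A) ≤ f (insert i A) - f A :=
      hsub A (insert j A) (Finset.subset_insert _ _) i (by simp [hij, hiA])
    exact bracket_convexOn (y i) (y j) (f A) (f (insert i A)) (f (insert j A))
      (f (insert i (insert j A))) (Q A * R A) hQR hsub'
  refine ⟨hconv, ?_⟩
  intro a b hab ε hε
  have := hconv.le_on_segment (Set.mem_univ a) (Set.mem_univ b)
    (z := ε) (by rwa [segment_eq_Icc hab])
  simpa using this
end
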